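/- For all integers n ≥ 1 and all k ≥ 0, the coefficients Q_{j,k,m} satisfy the recursions Q_{0,k,2n+2} = (n+k+1)·Q_{0,k,2n+1} + (n−k+2)·Q_{0,k−1,2n+1} + Q_{1,k−1,2n+1} and Q_{1,k,2n+2} = (n+k+1)·Q_{1,k,2n+1} + (n−k+1)·Q_{1,k−1,2n+1}, where by convention Q_{j,−1,m} = 0. (These express Q_{2n+2}(x,z) = Ψ_{2n+1}(Q_{2n+1}(x,z)).) -/

import Mathlib

namespace DescentParity

/-- Number of descent positions i (1-indexed adjacent pairs) of a permutation of {1,…,m}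
    whose first (larger) entry is even. Entries of `Fin m` represent values via `(·:ℕ)+1`. -/
def desBegE (m : ℕ) (σ : Equiv.Perm (Fin m)) : ℕ :=
  (Finset.univ.filter (fun p : Fin m × Fin m =>
    (p.2 : ℕ) = (p.1 : ℕ) + 1 ∧ σ p.2 < σ p.1 ∧ Even ((σ p.1 : ℕ) + 1))).card

def desEndE (m : ℕ) (σ : Equiv.Perm (Fin m)) : ℕ :=
  (Finset.univ.filter (fun p : Fin m × Fin m =>
    (p.2 : ℕ) = (p.1 : ℕ) + 1 ∧ σ p.2 < σ p.1 ∧ Even ((σ p.2 : ℕ) + 1))).card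

def desBegO (m : ℕ) (σ : Equiv.Perm (Fin m)) : ℕ :=
  (Finset.univ.filter (fun p : Fin m × Fin m =>
    (p.2 : ℕ) = (p.1 : ℕ) + 1 ∧ σ p.2 < σ p.1 ∧ Odd ((σ p.1 : ℕ) + 1))).card

def desEndO (m : ℕ) (σ : Equiv.Perm (Fin m)) : ℕ :=
  (Finset.univ.filter (fun p : Fin m × Fin m =>
    (p.2 : ℕ) = (p.1 : ℕ) + 1 ∧ σ p.2 < σ p.1 ∧ Odd ((σ p.2 : ℕ) + 1))).card

/-- The first entry σ₁ of the permutation is even. -/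
def firstEven (m : ℕ) (σ : Equiv.Perm (Fin m)) : Prop :=
  ∃ i : Fin m, (i : ℕ) = 0 ∧ Even ((σ i : ℕ) + 1)

def firstOdd (m : ℕ) (σ : Equiv.Perm (Fin m)) : Prop :=
  ∃ i : Fin m, (i : ℕ) = 0 ∧ Odd ((σ i : ℕ) + 1)

instance (m : ℕ) (σ : Equiv.Perm (Fin m)) : Decidable (firstEven m σ) := by
  unfold firstEven; infer_instance

instance (m : ℕ) (σ : Equiv.Perm (Fin m)) : Decidable (firstOdd m σ) := by
  unfold firstOdd; infer_instance

def R (k m : ℕ) : ℕ :=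
  (Finset.univ.filter (fun σ : Equiv.Perm (Fin m) => desBegE m σ = k)).card

def M (k m : ℕ) : ℕ :=
  (Finset.univ.filter (fun σ : Equiv.Perm (Fin m) => desBegO m σ = k)).card

def P0 (k m : ℕ) : ℕ :=
  (Finset.univ.filter (fun σ : Equiv.Perm (Fin m) => firstOdd m σ ∧ desEndE m σ = k)).card

def P1 (k m : ℕ) : ℕ :=
  (Finset.univ.filter (fun σ : Equiv.Perm (Fin m) => firstEven m σ ∧ desEndE m σ = k)).card

def Q0 (k m : ℕ) : ℕ :=
  (Finset.univ.filter (fun σ : Equiv.Perm (Fin m) => firstEven m σ ∧ desEndO m σ = k)).card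

def Q1 (k m : ℕ) : ℕ :=
  (Finset.univ.filter (fun σ : Equiv.Perm (Fin m) => firstOdd m σ ∧ desEndO m σ = k)).card


open Finset Equiv Equiv.Perm


def delA (l : List ℕ) (p : ℕ) : Prop :=
  p < l.length ∧ Odd (l.getD p 0) ∧ (p = 0 ∨ l.getD (p-1) 0 < l.getD p 0)
instance (l : List ℕ) (p : ℕ) : Decidable (delA l p) := by unfold delA; infer_instance
def del (l : List ℕ) (p : ℕ) : ℕ := if delA l p then 1 else 0
def dOI (l : List ℕ) : ℕ :=
  ∑ j ∈ range l.length,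
    if (0 < j ∧ l.getD j 0 < l.getD (j-1) 0 ∧ Odd (l.getD j 0)) then 1 else 0
def oddCount (l : List ℕ) : ℕ :=
  ∑ j ∈ range l.length, if Odd (l.getD j 0) then 1 else 0
def listOf (m : ℕ) (σ : Equiv.Perm (Fin m)) : List ℕ := List.ofFn (fun i => (σ i : ℕ) + 1)
def ins (m : ℕ) (τ : Equiv.Perm (Fin m)) (p : Fin (m+1)) : Equiv.Perm (Fin (m+1)) :=
  (finSuccEquiv' p).trans ((Equiv.optionCongr τ).trans (finSuccEquiv' (Fin.last m)).symm)

lemma dOI_nil : dOI [] = 0 := rfl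

lemma dOI_cons (a : ℕ) (l : List ℕ) :
    dOI (a :: l) = (if (l.getD 0 0 < a ∧ Odd (l.getD 0 0)) then 1 else 0) + dOI l := by
  unfold dOI
  rw [List.length_cons, Finset.sum_range_succ']
  simp only [Nat.lt_irrefl, false_and, if_false, add_zero]
  have hpt : ∀ i ∈ range l.length,
      (if (0 < i + 1 ∧ (a :: l).getD (i+1) 0 < (a :: l).getD (i+1-1) 0 ∧
          Odd ((a :: l).getD (i+1) 0)) then 1 else 0)
      = (if (0 < i ∧ l.getD i 0 < l.getD (i-1) 0 ∧ Odd (l.getD i 0)) then 1 else 0)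
        + (if i = 0 then (if (l.getD 0 0 < a ∧ Odd (l.getD 0 0)) then 1 else 0) else 0) := by
    intro i _
    rcases i with _ | i
    · simp [List.getD_cons_succ, List.getD_cons_zero, And.comm]
    · simp [List.getD_cons_succ]
  rw [Finset.sum_congr rfl hpt, Finset.sum_add_distrib, Finset.sum_ite_eq' (range l.length) 0]
  by_cases h : (0:ℕ) ∈ range l.length
  · rw [if_pos h]; ring
  · rw [if_neg h]
    have : l = [] := by
      cases l with
      | nil => rfl
      | cons b t => exact absurd (mem_range.2 (Nat.succ_pos _)) h
    subst this
    simp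

lemma del_cons_zero (a : ℕ) (t : List ℕ) : del (a :: t) 0 = if Odd a then 1 else 0 := by
  simp [del, delA]

lemma del_cons_one (a b : ℕ) (t : List ℕ) :
    del (a :: b :: t) 1 = if (Odd b ∧ a < b) then 1 else 0 := by
  have h : delA (a :: b :: t) 1 ↔ (Odd b ∧ a < b) := by
    simp only [delA, List.length_cons, List.getD_cons_succ, List.getD_cons_zero]
    constructor
    · rintro ⟨-, h2, h3⟩
      rcases h3 with h | h
      · omega
      · exact ⟨h2, h⟩
    · rintro ⟨h2, h3⟩
      exact ⟨by omega, h2, Or.inr h3⟩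
  simp only [del, h]

lemma del_cons_succ_succ (a b : ℕ) (t : List ℕ) (r : ℕ) :
    del (a :: b :: t) (r+2) = del (b :: t) (r+1) := by
  have h : delA (a :: b :: t) (r+2) ↔ delA (b :: t) (r+1) := by
    simp only [delA, List.length_cons, List.getD_cons_succ]
    constructor
    · rintro ⟨h1, h2, h3⟩
      refine ⟨by omega, h2, Or.inr ?_⟩
      rcases h3 with h | h
      · omega
      · rcases r with _ | r' <;> simpa using h
    · rintro ⟨h1, h2, h3⟩
      refine ⟨by omega, h2, Or.inr ?_⟩
      rcases h3 with h | h
      · omega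
      · rcases r with _ | r' <;> simpa using h
  simp only [del, h]

lemma dOI_insertIdx (M : ℕ) (hM : Even M) :
    ∀ (l : List ℕ), (∀ x ∈ l, x < M) → l.Nodup → ∀ p, p ≤ l.length →
      dOI (l.insertIdx p M) = dOI l + del l p := by
  intro l
  induction l with
  | nil =>
    intro _ _ p hp
    have : p = 0 := Nat.le_zero.1 hp
    subst this
    rw [List.insertIdx_zero, dOI_cons]
    norm_num [dOI, del, delA]
  | cons a t ih =>
    intro hlt hnd p hp
    rcases p with _ | q
    · -- p = 0 : M :: a :: t
      rw [List.insertIdx_zero, dOI_cons, del_cons_zero]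
      have ha : a < M := hlt a (by simp)
      have h0 : (a :: t).getD 0 0 = a := rfl
      rw [h0]
      by_cases hodd : Odd a
      · rw [if_pos ⟨ha, hodd⟩, if_pos hodd]; ring
      · rw [if_neg (fun h => hodd h.2), if_neg hodd]; ring
    · -- p = q+1 : a :: insertIdx q M t
      rw [List.insertIdx_succ_cons, dOI_cons, dOI_cons,
        ih (fun x hx => hlt x (List.mem_cons_of_mem _ hx)) hnd.of_cons q
          (Nat.le_of_succ_le_succ hp)]
      have hq : q ≤ t.length := Nat.le_of_succ_le_succ hp
      rcases q with _ | r
      · -- q = 0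
        rw [List.insertIdx_zero]
        have h1 : (M :: t).getD 0 0 = M := rfl
        rw [h1]
        have hnotM : ¬ (M < a ∧ Odd M) := by
          rintro ⟨h, -⟩
          exact absurd (hlt a (by simp)) (Nat.lt_asymm h)
        rw [if_neg hnotM]
        rcases t with _ | ⟨b, t'⟩
        · simp [del, delA]
        · have hb : b ≠ a := by
            intro h; subst h
            exact (List.nodup_cons.1 hnd).1 (by simp)
          have h2 : (b :: t').getD 0 0 = b := rfl
          rw [h2, del_cons_one, del_cons_zero]
          by_cases hodd : Odd b
          · rcases Nat.lt_trichotomy b a with h | h | h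
            · rw [if_pos hodd, if_pos ⟨h, hodd⟩,
                if_neg (by omega : ¬ (Odd b ∧ a < b))]; ring
            · exact absurd h hb
            · rw [if_pos hodd, if_neg (by omega : ¬ (b < a ∧ Odd b)),
                if_pos ⟨hodd, h⟩]; ring
          · rw [if_neg hodd, if_neg (fun h => hodd h.2), if_neg (fun h => hodd h.1)]
            ring
      · -- q = r+1
        rcases t with _ | ⟨b, t'⟩
        · exact absurd hq (by simp)
        · rw [List.insertIdx_succ_cons, del_cons_succ_succ]
          have h2 : (b :: (t'.insertIdx r M)).getD 0 0 = b := rfl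
          have h3 : (b :: t').getD 0 0 = b := rfl
          rw [h2, h3]; ring

lemma del_le_one (l : List ℕ) (p : ℕ) : del l p ≤ 1 := by
  unfold del; split <;> omega

lemma dOI_add_sum_del (l : List ℕ) (hnd : l.Nodup) :
    dOI l + ∑ j ∈ range (l.length + 1), del l j = oddCount l := by
  rw [Finset.sum_range_succ]
  have hlast : del l l.length = 0 := by
    unfold del
    rw [if_neg]; rintro ⟨h, -⟩; omega
  rw [hlast, add_zero]
  unfold dOI oddCount
  rw [← Finset.sum_add_distrib]
  apply Finset.sum_congr rfl
  intro j hj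
  have hj' : j < l.length := mem_range.1 hj
  by_cases hodd : Odd (l.getD j 0)
  · rcases Nat.eq_zero_or_pos j with h0 | h0
    · subst h0
      rw [if_neg (by omega : ¬ (0 < 0 ∧ l.getD 0 0 < l.getD (0-1) 0 ∧ Odd (l.getD 0 0))),
        if_pos hodd]
      have : del l 0 = 1 := by
        unfold del
        rw [if_pos (show delA l 0 from ⟨hj', hodd, Or.inl rfl⟩)]
      omega
    · have hne : l.getD (j-1) 0 ≠ l.getD j 0 := by
        rw [List.getD_eq_getElem _ _ (by omega : j - 1 < l.length),
          List.getD_eq_getElem _ _ hj']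
        intro heq
        exact absurd (hnd.getElem_inj_iff.mp heq) (by omega)
      rcases Nat.lt_trichotomy (l.getD j 0) (l.getD (j-1) 0) with h | h | h
      · rw [if_pos ⟨h0, h, hodd⟩, if_pos hodd]
        unfold del
        rw [if_neg (show ¬ delA l j by rintro ⟨-, -, h3 | h3⟩ <;> omega)]
      · exact absurd h.symm hne
      · rw [if_neg (by rintro ⟨-, h2, -⟩; omega), if_pos hodd]
        unfold del
        rw [if_pos (show delA l j from ⟨hj', hodd, Or.inr h⟩)]
  · rw [if_neg (fun h => hodd h.2.2), if_neg hodd]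
    unfold del
    rw [if_neg (fun h : delA l j => hodd h.2.1)]

lemma ins_apply_self (m : ℕ) (τ : Perm (Fin m)) (p : Fin (m+1)) :
    ins m τ p p = Fin.last m := by
  simp [ins, finSuccEquiv'_at, finSuccEquiv'_symm_none]

lemma ins_apply_lt (m : ℕ) (τ : Perm (Fin m)) (p : Fin (m+1)) (i : Fin (m+1))
    (h : (i : ℕ) < (p : ℕ)) (hi : (i : ℕ) < m) :
    ins m τ p i = Fin.castSucc (τ ⟨(i : ℕ), hi⟩) := by
  obtain ⟨j, rfl⟩ : ∃ j : Fin m, i = Fin.castSucc j :=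
    ⟨⟨(i : ℕ), hi⟩, by apply Fin.ext; simp⟩
  have e : (⟨((Fin.castSucc j) : ℕ), hi⟩ : Fin m) = j := by apply Fin.ext; simp
  rw [e, ins]
  simp only [Equiv.trans_apply]
  rw [finSuccEquiv'_below (show Fin.castSucc j < p from by
    rw [Fin.lt_iff_val_lt_val]; simpa using h)]
  simp [finSuccEquiv'_symm_some, Fin.succAbove_last]

lemma ins_apply_gt (m : ℕ) (τ : Perm (Fin m)) (p : Fin (m+1)) (i : Fin (m+1))
    (h : (p : ℕ) < (i : ℕ)) (hi : (i : ℕ) - 1 < m) :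
    ins m τ p i = Fin.castSucc (τ ⟨(i : ℕ) - 1, hi⟩) := by
  obtain ⟨j, rfl⟩ : ∃ j : Fin m, i = Fin.succ j :=
    ⟨⟨(i : ℕ) - 1, hi⟩, by apply Fin.ext; simp; omega⟩
  have e : (⟨((Fin.succ j) : ℕ) - 1, hi⟩ : Fin m) = j := by apply Fin.ext; simp
  rw [e, ins]
  simp only [Equiv.trans_apply]
  rw [finSuccEquiv'_above (show p ≤ Fin.castSucc j from by
    rw [Fin.le_iff_val_le_val]; simp at h ⊢; omega)]
  simp [finSuccEquiv'_symm_some, Fin.succAbove_last]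

lemma length_listOf (m : ℕ) (σ : Perm (Fin m)) : (listOf m σ).length = m := by
  simp [listOf]

lemma getElem_listOf (m : ℕ) (σ : Perm (Fin m)) (j : ℕ) (hj : j < m) :
    (listOf m σ)[j]'(by rw [length_listOf]; exact hj) = (σ ⟨j, hj⟩ : ℕ) + 1 := by
  simp only [listOf, List.getElem_ofFn]

lemma listOf_ins (m : ℕ) (τ : Perm (Fin m)) (p : Fin (m+1)) :
    listOf (m+1) (ins m τ p) = (listOf m τ).insertIdx (p : ℕ) (m+1) := by
  have hp : (p : ℕ) ≤ (listOf m τ).length := by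
    rw [length_listOf]; omega
  apply List.ext_getElem
  · rw [List.length_insertIdx_of_le_length hp, length_listOf, length_listOf]
  · intro i hi1 hi2
    have hi1' : i < m + 1 := by rwa [length_listOf] at hi1
    rcases Nat.lt_trichotomy i (p : ℕ) with h | h | h
    · have him : i < m := by omega
      rw [List.getElem_insertIdx_of_lt h hi2,
        getElem_listOf (m+1) _ i hi1', getElem_listOf m τ i him,
        ins_apply_lt m τ p ⟨i, hi1'⟩ h him]
      simp
    · subst h
      rw [List.getElem_insertIdx_self hi2, getElem_listOf (m+1) _ _ hi1']
      have : (⟨(p:ℕ), hi1'⟩ : Fin (m+1)) = p := by apply Fin.ext; rfl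
      rw [this, ins_apply_self]
      simp
    · obtain ⟨c, rfl⟩ : ∃ c, i = (p:ℕ) + c + 1 := ⟨i - p - 1, by omega⟩
      have h1 : (p:ℕ) + c < (listOf m τ).length := by
        rw [length_listOf]; omega
      rw [List.getElem_insertIdx_add_succ _ _ _ _ h1,
        getElem_listOf (m+1) _ _ hi1',
        getElem_listOf m τ _ (by omega : (p:ℕ) + c < m),
        ins_apply_gt m τ p ⟨(p:ℕ) + c + 1, hi1'⟩ (by simp) (by simp; omega)]
      simp

lemma getD_listOf (m : ℕ) (σ : Perm (Fin m)) (j : ℕ) (hj : j < m) :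
    (listOf m σ).getD j 0 = (σ ⟨j, hj⟩ : ℕ) + 1 := by
  rw [List.getD_eq_getElem _ _ (by rw [length_listOf]; exact hj), getElem_listOf m σ j hj]

lemma desEndO_eq_dOI (m : ℕ) (σ : Perm (Fin m)) :
    desEndO m σ = dOI (listOf m σ) := by
  classical
  set l := listOf m σ with hl
  have step1 : desEndO m σ = ∑ j ∈ range m,
      (if (j+1 < m ∧ l.getD (j+1) 0 < l.getD j 0 ∧ Odd (l.getD (j+1) 0)) then 1 else 0) := by
    rw [desEndO, Finset.card_filter, Fintype.sum_prod_type, ← Fin.sum_univ_eq_sum_range]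
    apply Finset.sum_congr rfl
    intro a _
    by_cases h : (a : ℕ) + 1 < m
    · have hpt : ∀ b : Fin m,
          (if ((b : ℕ) = (a : ℕ) + 1 ∧ σ b < σ a ∧ Odd ((σ b : ℕ) + 1)) then 1 else 0)
          = (if b = (⟨(a:ℕ)+1, h⟩ : Fin m) then
              (if (σ b < σ a ∧ Odd ((σ b : ℕ) + 1)) then 1 else 0) else 0) := by
        intro b
        by_cases hb : b = (⟨(a:ℕ)+1, h⟩ : Fin m)
        · subst hb
          simp only [if_pos rfl]
          apply if_congr _ rfl rfl
          simp
        · rw [if_neg hb, if_neg]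
          rintro ⟨h1, -⟩
          exact hb (Fin.ext h1)
      rw [Finset.sum_congr rfl (fun b _ => hpt b), Finset.sum_ite_eq' univ _ _,
        if_pos (mem_univ _)]
      have ha : (a : ℕ) < m := a.isLt
      apply if_congr _ rfl rfl
      rw [getD_listOf m σ ((a:ℕ)+1) h, getD_listOf m σ (a:ℕ) ha]
      have : (⟨(a : ℕ), ha⟩ : Fin m) = a := Fin.ext rfl
      rw [this, Fin.lt_iff_val_lt_val, Nat.add_lt_add_iff_right]
      exact ⟨fun hx => ⟨h, hx⟩, And.right⟩
    · rw [if_neg (fun hh => h hh.1)]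
      apply Finset.sum_eq_zero
      intro b _
      rw [if_neg]
      rintro ⟨h1, -⟩
      have h1' : (b : ℕ) = (a : ℕ) + 1 := h1
      have := b.isLt
      omega
  rw [step1, dOI]
  have hlen : l.length = m := by rw [hl, length_listOf]
  rw [hlen]
  -- now reindex
  rcases m with _ | mm
  · simp
  · conv_lhs => rw [Finset.sum_range_succ]
    conv_rhs => rw [Finset.sum_range_succ']
    have h0 : (if (0 < 0 ∧ l.getD 0 0 < l.getD (0-1) 0 ∧ Odd (l.getD 0 0)) then 1 else 0) = 0 := by
      rw [if_neg]; rintro ⟨h, -⟩; omega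
    have hmm : (if (mm+1 < mm+1 ∧ l.getD (mm+1) 0 < l.getD mm 0 ∧ Odd (l.getD (mm+1) 0))
        then 1 else 0) = 0 := by
      rw [if_neg]; rintro ⟨h, -⟩; omega
    rw [hmm, h0, add_zero, add_zero]
    apply Finset.sum_congr rfl
    intro j hj
    have hj' : j < mm := mem_range.1 hj
    apply if_congr _ rfl rfl
    simp only [Nat.add_sub_cancel]
    constructor
    · rintro ⟨-, h2⟩; exact ⟨by omega, h2⟩
    · rintro ⟨-, h2⟩; exact ⟨by omega, h2⟩

lemma ins_injective (m : ℕ) :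
    Function.Injective (fun tp : Perm (Fin m) × Fin (m+1) => ins m tp.1 tp.2) := by
  rintro ⟨τ, p⟩ ⟨τ', p'⟩ h
  simp only at h
  have hp : p = p' := by
    have h1 : ins m τ' p' p = Fin.last m := by rw [← h]; exact ins_apply_self m τ p
    have h2 : ins m τ' p' p' = Fin.last m := ins_apply_self m τ' p'
    exact (ins m τ' p').injective (h1.trans h2.symm)
  subst hp
  have hτ : τ = τ' := by
    apply Equiv.ext
    intro x
    have happ := congrArg (fun e : Perm (Fin (m+1)) => e ((finSuccEquiv' p).symm (some x))) h
    simp only [ins, Equiv.trans_apply, Equiv.apply_symm_apply, Equiv.optionCongr_apply,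
      finSuccEquiv'_succAbove, Option.map_some, finSuccEquiv'_symm_some,
      Fin.succAbove_last] at happ
    exact Fin.castSucc_injective m happ
  rw [hτ]

lemma ins_bijective (m : ℕ) :
    Function.Bijective (fun tp : Perm (Fin m) × Fin (m+1) => ins m tp.1 tp.2) := by
  rw [Fintype.bijective_iff_injective_and_card]
  refine ⟨ins_injective m, ?_⟩
  simp [Fintype.card_perm, Fintype.card_fin, Nat.factorial_succ]
  ring

lemma sum_odd_range (n : ℕ) :
    (∑ j ∈ range (2*n+1), if Odd (j+1) then (1:ℕ) else 0) = n + 1 := by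
  induction n with
  | zero => decide
  | succ k ih =>
    have h : 2*(k+1)+1 = (2*k+1)+1+1 := by ring
    rw [h, Finset.sum_range_succ, Finset.sum_range_succ, ih]
    have h1 : ¬ Odd (2*k+1+1) := by rw [Nat.odd_iff]; omega
    have h2 : Odd (2*k+1+1+1) := by rw [Nat.odd_iff]; omega
    rw [if_neg h1, if_pos h2]

lemma oddCount_listOf (n : ℕ) (σ : Perm (Fin (2*n+1))) :
    oddCount (listOf (2*n+1) σ) = n + 1 := by
  unfold oddCount
  rw [length_listOf, ← Fin.sum_univ_eq_sum_range]
  have step : ∀ i : Fin (2*n+1),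
      (if Odd ((listOf (2*n+1) σ).getD (i : ℕ) 0) then (1:ℕ) else 0)
      = (if Odd ((σ i : ℕ) + 1) then 1 else 0) := by
    intro i
    rw [getD_listOf (2*n+1) σ (i : ℕ) i.isLt]
  rw [Finset.sum_congr rfl (fun i _ => step i)]
  have := Equiv.sum_comp σ (fun i : Fin (2*n+1) => if Odd ((i : ℕ) + 1) then (1:ℕ) else 0)
  rw [this, Fin.sum_univ_eq_sum_range (fun j => if Odd (j+1) then (1:ℕ) else 0) (2*n+1),
    sum_odd_range n]

lemma nodup_listOf (m : ℕ) (σ : Perm (Fin m)) : (listOf m σ).Nodup := by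
  apply List.nodup_ofFn.2
  intro a b hab
  have hab' : (σ a : ℕ) + 1 = (σ b : ℕ) + 1 := hab
  exact σ.injective (Fin.ext (by omega))

lemma mem_listOf_lt (m : ℕ) (σ : Perm (Fin m)) : ∀ x ∈ listOf m σ, x < m + 1 := by
  intro x hx
  rw [listOf, List.mem_ofFn] at hx
  obtain ⟨i, rfl⟩ := hx
  show (σ i : ℕ) + 1 < m + 1
  have := (σ i).isLt
  omega

lemma firstEven_iff (m : ℕ) (σ : Perm (Fin (m+1))) :
    firstEven (m+1) σ ↔ Even ((σ 0 : ℕ) + 1) := by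
  constructor
  · rintro ⟨i, hi, he⟩
    have : i = 0 := Fin.ext (by simpa using hi)
    rwa [this] at he
  · intro h
    exact ⟨0, rfl, h⟩

lemma firstOdd_iff (m : ℕ) (σ : Perm (Fin (m+1))) :
    firstOdd (m+1) σ ↔ Odd ((σ 0 : ℕ) + 1) := by
  constructor
  · rintro ⟨i, hi, he⟩
    have : i = 0 := Fin.ext (by simpa using hi)
    rwa [this] at he
  · intro h
    exact ⟨0, rfl, h⟩

lemma firstOdd_iff_not (m : ℕ) (σ : Perm (Fin (m+1))) :
    firstOdd (m+1) σ ↔ ¬ firstEven (m+1) σ := by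
  rw [firstOdd_iff, firstEven_iff, ← Nat.not_even_iff_odd]

lemma ins_apply_zero (n : ℕ) (τ : Perm (Fin (2*n+1))) (p : Fin (2*n+2)) (hp : p ≠ 0) :
    ((ins (2*n+1) τ p) 0 : ℕ) = (τ 0 : ℕ) := by
  have hm : (0:ℕ) < 2*n+1 := by omega
  have hpv : 0 < (p : ℕ) := by
    rcases Nat.eq_zero_or_pos (p : ℕ) with h | h
    · exact absurd (Fin.ext h) hp
    · exact h
  have := ins_apply_lt (2*n+1) τ p 0 (by simpa using hpv) hm
  rw [this]
  simp only [Fin.coe_castSucc]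
  congr 1

lemma firstOdd_ins (n : ℕ) (τ : Perm (Fin (2*n+1))) (p : Fin (2*n+2)) :
    firstOdd (2*n+2) (ins (2*n+1) τ p) ↔ (p ≠ 0 ∧ firstOdd (2*n+1) τ) := by
  by_cases hp : p = 0
  · subst hp
    rw [firstOdd_iff]
    have h := ins_apply_self (2*n+1) τ 0
    rw [h]
    simp only [Fin.val_last]
    constructor
    · intro hodd
      exfalso
      rw [Nat.odd_iff] at hodd
      omega
    · rintro ⟨h1, -⟩
      exact absurd rfl h1
  · rw [firstOdd_iff, ins_apply_zero n τ p hp]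
    constructor
    · intro h
      refine ⟨hp, ?_⟩
      rw [firstOdd_iff]
      exact h
    · rintro ⟨-, h⟩
      rw [firstOdd_iff] at h
      exact h

lemma firstEven_ins (n : ℕ) (τ : Perm (Fin (2*n+1))) (p : Fin (2*n+2)) :
    firstEven (2*n+2) (ins (2*n+1) τ p) ↔ (p = 0 ∨ firstEven (2*n+1) τ) := by
  by_cases hp : p = 0
  · subst hp
    rw [firstEven_iff]
    have h := ins_apply_self (2*n+1) τ 0
    rw [h]
    simp only [Fin.val_last]
    constructor
    · intro _
      exact Or.inl trivial
    · intro _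
      exact ⟨n+1, by omega⟩
  · rw [firstEven_iff, ins_apply_zero n τ p hp]
    constructor
    · intro h
      refine Or.inr ?_
      rw [firstEven_iff]
      exact h
    · rintro (h | h)
      · exact absurd h hp
      · rw [firstEven_iff] at h
        exact h

lemma del_listOf_zero (n : ℕ) (τ : Perm (Fin (2*n+1))) :
    del (listOf (2*n+1) τ) 0 = if firstOdd (2*n+1) τ then 1 else 0 := by
  unfold del
  apply if_congr _ rfl rfl
  rw [firstOdd_iff]
  unfold delA
  rw [length_listOf, getD_listOf (2*n+1) τ 0 (by omega)]
  constructor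
  · rintro ⟨-, h, -⟩
    exact h
  · intro h
    exact ⟨by omega, h, Or.inl rfl⟩

-- master counting lemma (A)
lemma sumA (l : List ℕ) (k d s : ℕ) (hd : dOI l = d)
    (hs : ∑ j ∈ range (l.length + 1), del l j = s) :
    ∑ j ∈ range (l.length + 1), (if d + del l j = k then (1:ℕ) else 0)
      = (if d = k then (l.length + 1) - s else 0) + (if d + 1 = k then s else 0) := by
  by_cases h1 : d = k
  · rw [if_pos h1, if_neg (by omega), add_zero]
    have hpt : ∀ j ∈ range (l.length + 1),
        (if d + del l j = k then (1:ℕ) else 0) = 1 - del l j := by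
      intro j _
      have := del_le_one l j
      interval_cases h : del l j <;> split <;> omega
    rw [Finset.sum_congr rfl hpt]
    have htot : (∑ j ∈ range (l.length + 1), (1 - del l j))
        + ∑ j ∈ range (l.length + 1), del l j = l.length + 1 := by
      rw [← Finset.sum_add_distrib]
      have : ∀ j ∈ range (l.length + 1), (1 - del l j) + del l j = 1 := by
        intro j _
        have := del_le_one l j
        omega
      rw [Finset.sum_congr rfl this, Finset.sum_const, card_range, smul_eq_mul, mul_one]
    omega
  · by_cases h2 : d + 1 = k
    · rw [if_neg h1, if_pos h2, zero_add]
      rw [← hs]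
      apply Finset.sum_congr rfl
      intro j _
      have := del_le_one l j
      interval_cases h : del l j <;> split <;> omega
    · rw [if_neg h1, if_neg h2]
      apply Finset.sum_eq_zero
      intro j _
      have := del_le_one l j
      split <;> omega

lemma count_transfer (m : ℕ) (P : Perm (Fin (m+1)) → Prop) [DecidablePred P] :
    (univ.filter P).card
      = ∑ τ : Perm (Fin m), ∑ p : Fin (m+1), (if P (ins m τ p) then (1:ℕ) else 0) := by
  rw [Finset.card_filter,
    ← Equiv.sum_comp (Equiv.ofBijective _ (ins_bijective m)) (fun σ => if P σ then (1:ℕ) else 0),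
    Fintype.sum_prod_type]
  rfl

lemma sumB (l : List ℕ) (k d s : ℕ) (hd : dOI l = d)
    (hs : ∑ j ∈ range (l.length + 1), del l j = s) (h0 : del l 0 = 1) :
    ∑ j ∈ range (l.length + 1), (if (j ≠ 0 ∧ d + del l j = k) then (1:ℕ) else 0)
      = (if d = k then (l.length + 1) - s else 0) + (if d + 1 = k then s - 1 else 0) := by
  have hA := sumA l k d s hd hs
  have hsplit : ∑ j ∈ range (l.length + 1), (if d + del l j = k then (1:ℕ) else 0)
      = (∑ j ∈ range (l.length + 1), (if (j ≠ 0 ∧ d + del l j = k) then (1:ℕ) else 0))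
        + (if d + del l 0 = k then (1:ℕ) else 0) := by
    rw [Finset.sum_range_succ', Finset.sum_range_succ'
      (fun j => if (j ≠ 0 ∧ d + del l j = k) then (1:ℕ) else 0)]
    have he : ∀ i, (if ((i+1 : ℕ) ≠ 0 ∧ d + del l (i+1) = k) then (1:ℕ) else 0)
        = (if d + del l (i+1) = k then (1:ℕ) else 0) := by
      intro i
      apply if_congr _ rfl rfl
      constructor
      · rintro ⟨-, h⟩; exact h
      · intro h; exact ⟨by omega, h⟩
    rw [Finset.sum_congr rfl (fun i _ => he i)]
    have h00 : (if ((0:ℕ) ≠ 0 ∧ d + del l 0 = k) then (1:ℕ) else 0) = 0 := by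
      rw [if_neg]; rintro ⟨h, -⟩; exact h rfl
    rw [h00]
    omega
  have hs1 : 1 ≤ s := by
    rw [← hs]
    calc 1 = del l 0 := h0.symm
    _ ≤ _ := Finset.single_le_sum (f := fun j => del l j) (fun j _ => Nat.zero_le _)
        (mem_range.2 (by omega))
  have hsle : s ≤ l.length + 1 := by
    rw [← hs]
    calc ∑ j ∈ range (l.length+1), del l j ≤ ∑ j ∈ range (l.length+1), 1 :=
        Finset.sum_le_sum (fun j _ => del_le_one l j)
    _ = l.length + 1 := by rw [Finset.sum_const, card_range, smul_eq_mul, mul_one]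
  rw [hA, h0] at hsplit
  by_cases h1 : d = k
  · have h2 : ¬ (d + 1 = k) := by omega
    rw [if_pos h1, if_neg h2] at hA ⊢
    rw [if_pos h1, if_neg h2, if_neg h2] at hsplit
    omega
  · by_cases h2 : d + 1 = k
    · rw [if_neg h1, if_pos h2] at hA ⊢
      rw [if_neg h1, if_pos h2, if_pos h2] at hsplit
      omega
    · rw [if_neg h1, if_neg h2] at hA ⊢
      rw [if_neg h1, if_neg h2, if_neg h2] at hsplit
      omega

lemma desEndO_ins (n : ℕ) (τ : Perm (Fin (2*n+1))) (p : Fin (2*n+2)) :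
    desEndO (2*n+2) (ins (2*n+1) τ p)
      = dOI (listOf (2*n+1) τ) + del (listOf (2*n+1) τ) (p : ℕ) := by
  rw [desEndO_eq_dOI]
  have h := listOf_ins (2*n+1) τ p
  rw [h]
  exact dOI_insertIdx (2*n+1+1) ⟨n+1, by ring⟩ _ (mem_listOf_lt (2*n+1) τ)
    (nodup_listOf (2*n+1) τ) _ (by rw [length_listOf]; omega)

lemma sum_ind {α : Type*} [Fintype α] (P : α → Prop) [DecidablePred P] (C : ℤ) :
    ∑ x : α, (if P x then C else 0) = C * ((univ.filter P).card : ℤ) := by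
  rw [← Finset.sum_filter, Finset.sum_const, nsmul_eq_mul]
  ring

lemma inner_Q1 (n k : ℕ) (τ : Perm (Fin (2*n+1))) :
    ((∑ p : Fin (2*n+2), (if (firstOdd (2*n+2) (ins (2*n+1) τ p)
        ∧ desEndO (2*n+2) (ins (2*n+1) τ p) = k) then (1:ℕ) else 0) : ℕ) : ℤ)
    = (if (firstOdd (2*n+1) τ ∧ desEndO (2*n+1) τ = k) then ((n:ℤ)+1+k) else 0)
      + (if (firstOdd (2*n+1) τ ∧ desEndO (2*n+1) τ + 1 = k) then ((n:ℤ)+1-k) else 0) := by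
  set l := listOf (2*n+1) τ with hl
  have hbridge : desEndO (2*n+1) τ = dOI l := desEndO_eq_dOI (2*n+1) τ
  have hlen : l.length = 2*n+1 := length_listOf (2*n+1) τ
  have hds : dOI l + (∑ j ∈ range (l.length + 1), del l j) = n + 1 := by
    rw [dOI_add_sum_del l (nodup_listOf (2*n+1) τ)]
    exact oddCount_listOf n τ
  by_cases hO : firstOdd (2*n+1) τ
  · have h0 : del l 0 = 1 := by
      show del (listOf (2*n+1) τ) 0 = 1
      rw [del_listOf_zero n τ, if_pos hO]
    have hs1 : 1 ≤ ∑ j ∈ range (l.length + 1), del l j := by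
      calc 1 = del l 0 := h0.symm
      _ ≤ _ := Finset.single_le_sum (f := fun j => del l j) (fun j _ => Nat.zero_le _)
          (mem_range.2 (by omega))
    have hpt : ∀ p : Fin (2*n+2),
        (if (firstOdd (2*n+2) (ins (2*n+1) τ p)
            ∧ desEndO (2*n+2) (ins (2*n+1) τ p) = k) then (1:ℕ) else 0)
        = (fun j => if (j ≠ 0 ∧ dOI l + del l j = k) then (1:ℕ) else 0) (p : ℕ) := by
      intro p
      simp only []
      apply if_congr _ rfl rfl
      rw [firstOdd_ins n τ p, desEndO_ins n τ p, ← hl]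
      constructor
      · rintro ⟨⟨hp, -⟩, h2⟩
        refine ⟨?_, h2⟩
        intro hv
        exact hp (Fin.ext hv)
      · rintro ⟨hp, h2⟩
        exact ⟨⟨fun hv => hp (by rw [hv]; rfl), hO⟩, h2⟩
    have hnat : (∑ p : Fin (2*n+2), (if (firstOdd (2*n+2) (ins (2*n+1) τ p)
        ∧ desEndO (2*n+2) (ins (2*n+1) τ p) = k) then (1:ℕ) else 0))
        = (if dOI l = k then (l.length + 1) - (∑ j ∈ range (l.length + 1), del l j) else 0)
          + (if dOI l + 1 = k then (∑ j ∈ range (l.length + 1), del l j) - 1 else 0) := by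
      rw [Finset.sum_congr rfl (fun p _ => hpt p),
        Fin.sum_univ_eq_sum_range (fun j => if (j ≠ 0 ∧ dOI l + del l j = k) then (1:ℕ) else 0)
          (2*n+2),
        show (2*n+2) = l.length + 1 by rw [hlen]]
      exact sumB l k (dOI l) _ rfl rfl h0
    rw [hnat, hbridge]
    set s := ∑ j ∈ range (l.length + 1), del l j with hs
    by_cases hk1 : dOI l = k
    · have hk2 : ¬ (dOI l + 1 = k) := by omega
      rw [if_pos hk1, if_neg hk2, if_pos ⟨hO, hk1⟩, if_neg (fun h => hk2 h.2)]
      have hv : l.length + 1 - s = n + 1 + k := by omega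
      rw [hv]
      push_cast
      ring
    · by_cases hk2 : dOI l + 1 = k
      · rw [if_neg hk1, if_pos hk2, if_neg (fun h => hk1 h.2), if_pos ⟨hO, hk2⟩]
        have hv : s - 1 = n + 1 - k ∧ k ≤ n + 1 := by omega
        rw [hv.1]
        omega
      · rw [if_neg hk1, if_neg hk2, if_neg (fun h => hk1 h.2), if_neg (fun h => hk2 h.2)]
        simp
  · have hnat : (∑ p : Fin (2*n+2), (if (firstOdd (2*n+2) (ins (2*n+1) τ p)
        ∧ desEndO (2*n+2) (ins (2*n+1) τ p) = k) then (1:ℕ) else 0)) = 0 := by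
      apply Finset.sum_eq_zero
      intro p _
      rw [if_neg]
      rintro ⟨h1, -⟩
      rw [firstOdd_ins n τ p] at h1
      exact hO h1.2
    rw [hnat, if_neg (fun h => hO h.1), if_neg (fun h => hO h.1)]
    simp

theorem Q1_final (n k : ℕ) :
    (Q1 k (2*n+2) : ℤ) = ((n:ℤ)+k+1) * Q1 k (2*n+1)
      + ((n:ℤ)-k+1) * (if k = 0 then 0 else (Q1 (k-1) (2*n+1) : ℤ)) := by
  have h1 : Q1 k (2*n+2) = ∑ τ : Perm (Fin (2*n+1)), ∑ p : Fin (2*n+2),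
      (if (firstOdd (2*n+2) (ins (2*n+1) τ p)
          ∧ desEndO (2*n+2) (ins (2*n+1) τ p) = k) then (1:ℕ) else 0) := by
    rw [Q1]
    exact count_transfer (2*n+1)
      (fun σ => firstOdd (2*n+2) σ ∧ desEndO (2*n+2) σ = k)
  rw [h1, Nat.cast_sum, Finset.sum_congr rfl (fun τ _ => inner_Q1 n k τ),
    Finset.sum_add_distrib, sum_ind, sum_ind]
  have hc1 : (univ.filter (fun τ : Perm (Fin (2*n+1)) =>
      firstOdd (2*n+1) τ ∧ desEndO (2*n+1) τ = k)).card = Q1 k (2*n+1) := rfl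
  rw [hc1]
  rcases k with _ | k'
  · have hc2 : (univ.filter (fun τ : Perm (Fin (2*n+1)) =>
        firstOdd (2*n+1) τ ∧ desEndO (2*n+1) τ + 1 = 0)).card = 0 := by
      rw [Finset.card_eq_zero, Finset.filter_eq_empty_iff]
      rintro τ - ⟨-, h⟩
      omega
    rw [hc2, if_pos rfl]
    push_cast
    ring
  · have hc2 : (univ.filter (fun τ : Perm (Fin (2*n+1)) =>
        firstOdd (2*n+1) τ ∧ desEndO (2*n+1) τ + 1 = k'+1)).card = Q1 k' (2*n+1) := by
      rw [Q1]
      congr 1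
      apply Finset.filter_congr
      intro τ _
      constructor
      · rintro ⟨h1, h2⟩; exact ⟨h1, by omega⟩
      · rintro ⟨h1, h2⟩; exact ⟨h1, by omega⟩
    rw [hc2, if_neg (by omega)]
    have : (k' + 1 - 1 : ℕ) = k' := rfl
    rw [this]
    push_cast
    ring

lemma inner_Q0 (n k : ℕ) (τ : Perm (Fin (2*n+1))) :
    ((∑ p : Fin (2*n+2), (if (firstEven (2*n+2) (ins (2*n+1) τ p)
        ∧ desEndO (2*n+2) (ins (2*n+1) τ p) = k) then (1:ℕ) else 0) : ℕ) : ℤ)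
    = (if (firstEven (2*n+1) τ ∧ desEndO (2*n+1) τ = k) then ((n:ℤ)+1+k) else 0)
      + (if (firstEven (2*n+1) τ ∧ desEndO (2*n+1) τ + 1 = k) then ((n:ℤ)+2-k) else 0)
      + (if (firstOdd (2*n+1) τ ∧ desEndO (2*n+1) τ + 1 = k) then 1 else 0) := by
  set l := listOf (2*n+1) τ with hl
  have hbridge : desEndO (2*n+1) τ = dOI l := desEndO_eq_dOI (2*n+1) τ
  have hlen : l.length = 2*n+1 := length_listOf (2*n+1) τ
  have hds : dOI l + (∑ j ∈ range (l.length + 1), del l j) = n + 1 := by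
    rw [dOI_add_sum_del l (nodup_listOf (2*n+1) τ)]
    exact oddCount_listOf n τ
  by_cases hE : firstEven (2*n+1) τ
  · have hO : ¬ firstOdd (2*n+1) τ := by
      rw [firstOdd_iff_not]
      exact fun h => h hE
    have hpt : ∀ p : Fin (2*n+2),
        (if (firstEven (2*n+2) (ins (2*n+1) τ p)
            ∧ desEndO (2*n+2) (ins (2*n+1) τ p) = k) then (1:ℕ) else 0)
        = (fun j => if (dOI l + del l j = k) then (1:ℕ) else 0) (p : ℕ) := by
      intro p
      simp only []
      apply if_congr _ rfl rfl
      rw [firstEven_ins n τ p, desEndO_ins n τ p, ← hl]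
      constructor
      · rintro ⟨-, h2⟩; exact h2
      · intro h2; exact ⟨Or.inr hE, h2⟩
    have hnat : (∑ p : Fin (2*n+2), (if (firstEven (2*n+2) (ins (2*n+1) τ p)
        ∧ desEndO (2*n+2) (ins (2*n+1) τ p) = k) then (1:ℕ) else 0))
        = (if dOI l = k then (l.length + 1) - (∑ j ∈ range (l.length + 1), del l j) else 0)
          + (if dOI l + 1 = k then (∑ j ∈ range (l.length + 1), del l j) else 0) := by
      rw [Finset.sum_congr rfl (fun p _ => hpt p),
        Fin.sum_univ_eq_sum_range (fun j => if (dOI l + del l j = k) then (1:ℕ) else 0)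
          (2*n+2),
        show (2*n+2) = l.length + 1 by rw [hlen]]
      exact sumA l k (dOI l) _ rfl rfl
    rw [hnat, hbridge]
    set s := ∑ j ∈ range (l.length + 1), del l j with hs
    by_cases hk1 : dOI l = k
    · have hk2 : ¬ (dOI l + 1 = k) := by omega
      rw [if_pos hk1, if_neg hk2, if_pos ⟨hE, hk1⟩, if_neg (fun h => hk2 h.2),
        if_neg (fun h => hk2 h.2)]
      have hv : l.length + 1 - s = n + 1 + k := by omega
      rw [hv]
      push_cast
      ring
    · by_cases hk2 : dOI l + 1 = k
      · rw [if_neg hk1, if_pos hk2, if_neg (fun h => hk1 h.2), if_pos ⟨hE, hk2⟩,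
          if_neg (fun h => hO h.1)]
        omega
      · rw [if_neg hk1, if_neg hk2, if_neg (fun h => hk1 h.2), if_neg (fun h => hk2 h.2),
          if_neg (fun h => hk2 h.2)]
        simp
  · have hO : firstOdd (2*n+1) τ := by
      rw [firstOdd_iff_not]
      exact hE
    have h0 : del l 0 = 1 := by
      show del (listOf (2*n+1) τ) 0 = 1
      rw [del_listOf_zero n τ, if_pos hO]
    have hpt : ∀ p : Fin (2*n+2),
        (if (firstEven (2*n+2) (ins (2*n+1) τ p)
            ∧ desEndO (2*n+2) (ins (2*n+1) τ p) = k) then (1:ℕ) else 0)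
        = (fun j => if (j = 0 ∧ dOI l + del l j = k) then (1:ℕ) else 0) (p : ℕ) := by
      intro p
      simp only []
      apply if_congr _ rfl rfl
      rw [firstEven_ins n τ p, desEndO_ins n τ p, ← hl]
      constructor
      · rintro ⟨h1, h2⟩
        rcases h1 with h1 | h1
        · exact ⟨by rw [h1]; rfl, h2⟩
        · exact absurd h1 hE
      · rintro ⟨h1, h2⟩
        exact ⟨Or.inl (Fin.ext h1), h2⟩
    have hnat : (∑ p : Fin (2*n+2), (if (firstEven (2*n+2) (ins (2*n+1) τ p)
        ∧ desEndO (2*n+2) (ins (2*n+1) τ p) = k) then (1:ℕ) else 0))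
        = (if dOI l + 1 = k then (1:ℕ) else 0) := by
      rw [Finset.sum_congr rfl (fun p _ => hpt p),
        Fin.sum_univ_eq_sum_range
          (fun j => if (j = 0 ∧ dOI l + del l j = k) then (1:ℕ) else 0) (2*n+2)]
      rw [show (2*n+2) = (2*n+1) + 1 from rfl, Finset.sum_range_succ']
      have hz : ∀ i ∈ range (2*n+1),
          (if ((i+1 : ℕ) = 0 ∧ dOI l + del l (i+1) = k) then (1:ℕ) else 0) = 0 := by
        intro i _
        rw [if_neg]
        rintro ⟨h, -⟩
        omega
      rw [Finset.sum_congr rfl hz, Finset.sum_const_zero, zero_add]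
      have h00 : (if ((0:ℕ) = 0 ∧ dOI l + del l 0 = k) then (1:ℕ) else 0)
          = (if dOI l + 1 = k then (1:ℕ) else 0) := by
        rw [h0]
        simp
      rw [h00]
    rw [hnat, hbridge]
    by_cases hk2 : dOI l + 1 = k
    · rw [if_pos hk2, if_neg (fun h => hE h.1), if_neg (fun h => hE h.1), if_pos ⟨hO, hk2⟩]
      simp
    · rw [if_neg hk2, if_neg (fun h => hE h.1), if_neg (fun h => hE h.1),
        if_neg (fun h => hk2 h.2)]
      simp

theorem Q0_final (n k : ℕ) :
    (Q0 k (2*n+2) : ℤ) = ((n:ℤ)+k+1) * Q0 k (2*n+1)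
      + ((n:ℤ)-k+2) * (if k = 0 then 0 else (Q0 (k-1) (2*n+1) : ℤ))
      + (if k = 0 then 0 else (Q1 (k-1) (2*n+1) : ℤ)) := by
  have h1 : Q0 k (2*n+2) = ∑ τ : Perm (Fin (2*n+1)), ∑ p : Fin (2*n+2),
      (if (firstEven (2*n+2) (ins (2*n+1) τ p)
          ∧ desEndO (2*n+2) (ins (2*n+1) τ p) = k) then (1:ℕ) else 0) := by
    rw [Q0]
    exact count_transfer (2*n+1)
      (fun σ => firstEven (2*n+2) σ ∧ desEndO (2*n+2) σ = k)
  rw [h1, Nat.cast_sum, Finset.sum_congr rfl (fun τ _ => inner_Q0 n k τ),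
    Finset.sum_add_distrib, Finset.sum_add_distrib, sum_ind, sum_ind, sum_ind]
  have hc1 : (univ.filter (fun τ : Perm (Fin (2*n+1)) =>
      firstEven (2*n+1) τ ∧ desEndO (2*n+1) τ = k)).card = Q0 k (2*n+1) := rfl
  rw [hc1]
  rcases k with _ | k'
  · have hc2 : (univ.filter (fun τ : Perm (Fin (2*n+1)) =>
        firstEven (2*n+1) τ ∧ desEndO (2*n+1) τ + 1 = 0)).card = 0 := by
      rw [Finset.card_eq_zero, Finset.filter_eq_empty_iff]
      rintro τ - ⟨-, h⟩
      omega
    have hc3 : (univ.filter (fun τ : Perm (Fin (2*n+1)) =>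
        firstOdd (2*n+1) τ ∧ desEndO (2*n+1) τ + 1 = 0)).card = 0 := by
      rw [Finset.card_eq_zero, Finset.filter_eq_empty_iff]
      rintro τ - ⟨-, h⟩
      omega
    rw [hc2, hc3, if_pos rfl]
    push_cast
    ring
  · have hc2 : (univ.filter (fun τ : Perm (Fin (2*n+1)) =>
        firstEven (2*n+1) τ ∧ desEndO (2*n+1) τ + 1 = k'+1)).card = Q0 k' (2*n+1) := by
      rw [Q0]
      congr 1
      apply Finset.filter_congr
      intro τ _
      constructor
      · rintro ⟨h1, h2⟩; exact ⟨h1, by omega⟩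
      · rintro ⟨h1, h2⟩; exact ⟨h1, by omega⟩
    have hc3 : (univ.filter (fun τ : Perm (Fin (2*n+1)) =>
        firstOdd (2*n+1) τ ∧ desEndO (2*n+1) τ + 1 = k'+1)).card = Q1 k' (2*n+1) := by
      rw [Q1]
      congr 1
      apply Finset.filter_congr
      intro τ _
      constructor
      · rintro ⟨h1, h2⟩; exact ⟨h1, by omega⟩
      · rintro ⟨h1, h2⟩; exact ⟨h1, by omega⟩
    rw [hc2, hc3, if_neg (by omega)]
    have : (k' + 1 - 1 : ℕ) = k' := rfl
    rw [this]
    push_cast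
    ring

theorem stmt_13 (n k : ℕ) (hn : 1 ≤ n) :
    (Q0 k (2*n+2) : ℤ) = ((n : ℤ) + k + 1) * Q0 k (2*n+1)
        + ((n : ℤ) - k + 2) * (if k = 0 then 0 else (Q0 (k-1) (2*n+1) : ℤ))
        + (if k = 0 then 0 else (Q1 (k-1) (2*n+1) : ℤ)) ∧
    (Q1 k (2*n+2) : ℤ) = ((n : ℤ) + k + 1) * Q1 k (2*n+1)
        + ((n : ℤ) - k + 1) * (if k = 0 then 0 else (Q1 (k-1) (2*n+1) : ℤ)) := by
  exact ⟨Q0_final n k, Q1_final n k⟩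

end DescentParity
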